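/- For Suslin matrices: det S_n(v,w) = (v·wᵀ)^{2^{n−1}} for all n ≥ 1 and all v, w ∈ R^{n+1}. -/
import Mathlib

open Matrix MvPolynomial

/-- The pair (S_n(v,w), conj(S_n(v,w))) of Suslin matrices of size 2^n built from
vectors v, w ∈ R^{n+1}, defined recursively: S₀(v,w) = (a₀), conj S₀ = (b₀), and
S_n(v,w) = [[a₀I, S_{n−1}(v₁,w₁)],[−conj S_{n−1}(v₁,w₁), b₀I]],
conj S_n(v,w) = [[b₀I, −S_{n−1}(v₁,w₁)],[conj S_{n−1}(v₁,w₁), a₀I]]. -/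
def suslinPair (R : Type*) [CommRing R] :
    (n : ℕ) → (Fin (n + 1) → R) → (Fin (n + 1) → R) →
      Matrix (Fin (2 ^ n)) (Fin (2 ^ n)) R × Matrix (Fin (2 ^ n)) (Fin (2 ^ n)) R
  | 0, v, w => (v 0 • (1 : Matrix (Fin 1) (Fin 1) R),
                w 0 • (1 : Matrix (Fin 1) (Fin 1) R))
  | n + 1, v, w =>
      let p := suslinPair R n (fun i => v i.succ) (fun i => w i.succ)
      let e : Fin (2 ^ n) ⊕ Fin (2 ^ n) ≃ Fin (2 ^ (n + 1)) :=
        finSumFinEquiv.trans (finCongr (by rw [pow_succ, mul_two]))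
      ((Matrix.reindex e e) (Matrix.fromBlocks (v 0 • 1) p.1 (-p.2) (w 0 • 1)),
       (Matrix.reindex e e) (Matrix.fromBlocks (w 0 • 1) (-p.1) p.2 (v 0 • 1)))

lemma det_fromBlocks_smul_one {R : Type*} [CommRing R] {p : Type*} [Fintype p]
    [DecidableEq p] (A B C : Matrix p p R) (d : R) :
    (Matrix.fromBlocks A B C (d • 1)).det = (d • A - B * C).det := by
  let σ := Option ((p × p) ⊕ (p × p) ⊕ (p × p))
  let S := MvPolynomial σ ℤ
  let A' : Matrix p p S := fun i j => X (some (Sum.inl (i, j)))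
  let B' : Matrix p p S := fun i j => X (some (Sum.inr (Sum.inl (i, j))))
  let C' : Matrix p p S := fun i j => X (some (Sum.inr (Sum.inr (i, j))))
  let d' : S := X none
  have key : (Matrix.fromBlocks A' B' C' (d' • 1)).det = (d' • A' - B' * C').det := by
    have hmul : (Matrix.fromBlocks A' B' C' (d' • 1)) *
        (Matrix.fromBlocks (d' • 1) 0 (-C') 1) =
        Matrix.fromBlocks (d' • A' - B' * C') B' 0 (d' • 1) := by
      rw [Matrix.fromBlocks_multiply]
      have h11 : A' * (d' • 1) + B' * -C' = d' • A' - B' * C' := by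
        rw [Matrix.mul_smul, Matrix.mul_one, Matrix.mul_neg, sub_eq_add_neg]
      have h12 : A' * 0 + B' * 1 = B' := by rw [Matrix.mul_zero, Matrix.mul_one, zero_add]
      have h21 : C' * (d' • 1) + (d' • 1) * -C' = 0 := by
        rw [Matrix.mul_smul, Matrix.mul_one, Matrix.smul_mul, Matrix.one_mul, smul_neg,
          add_neg_cancel]
      have h22 : C' * 0 + (d' • 1) * 1 = d' • 1 := by
        rw [Matrix.mul_zero, Matrix.mul_one, zero_add]
      rw [h11, h12, h21, h22]
    have hdet := congrArg Matrix.det hmul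
    rw [Matrix.det_mul, Matrix.det_fromBlocks_zero₁₂, Matrix.det_fromBlocks_zero₂₁] at hdet
    simp only [Matrix.det_one, mul_one] at hdet
    have hd : (d' • (1 : Matrix p p S)).det = d' ^ Fintype.card p := by
      rw [Matrix.det_smul, Matrix.det_one, mul_one]
    rw [hd] at hdet
    exact mul_right_cancel₀ (pow_ne_zero _ (MvPolynomial.X_ne_zero _)) hdet
  let val : σ → R := fun s => match s with
    | none => d
    | some (Sum.inl (i, j)) => A i j
    | some (Sum.inr (Sum.inl (i, j))) => B i j
    | some (Sum.inr (Sum.inr (i, j))) => C i j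
  let f : S →+* R := (MvPolynomial.aeval val).toRingHom
  have hd : f d' = d := by
    show (MvPolynomial.aeval val) (X none) = d
    rw [MvPolynomial.aeval_X]
  have hA : A'.map f = A := by
    ext i j
    show (MvPolynomial.aeval val) (X (some (Sum.inl (i, j)))) = A i j
    rw [MvPolynomial.aeval_X]
  have hB : B'.map f = B := by
    ext i j
    show (MvPolynomial.aeval val) (X (some (Sum.inr (Sum.inl (i, j))))) = B i j
    rw [MvPolynomial.aeval_X]
  have hC : C'.map f = C := by
    ext i j
    show (MvPolynomial.aeval val) (X (some (Sum.inr (Sum.inr (i, j))))) = C i j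
    rw [MvPolynomial.aeval_X]
  have h1 : (d' • (1 : Matrix p p S)).map f = d • 1 := by
    ext i j
    simp only [Matrix.map_apply, Matrix.smul_apply, Matrix.one_apply, smul_eq_mul, mul_ite,
      mul_one, mul_zero, apply_ite f, map_zero, hd, _root_.map_one]
  have h2 : (d' • A' - B' * C').map f = d • A - B * C := by
    ext i j
    simp only [Matrix.map_apply, Matrix.sub_apply, Matrix.smul_apply, Matrix.mul_apply,
      smul_eq_mul, map_sub, _root_.map_mul, map_sum, hd]
    rw [← hA, ← hB, ← hC]
    simp [Matrix.map_apply]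
  have hkey := congrArg f key
  rw [RingHom.map_det, RingHom.map_det, RingHom.mapMatrix_apply, RingHom.mapMatrix_apply,
    Matrix.fromBlocks_map, hA, hB, hC, h1, h2] at hkey
  exact hkey

lemma suslin_mul_conj {R : Type*} [CommRing R] :
    ∀ (n : ℕ) (v w : Fin (n + 1) → R),
      (suslinPair R n v w).1 * (suslinPair R n v w).2 = (∑ i, v i * w i) • 1 ∧
      (suslinPair R n v w).2 * (suslinPair R n v w).1 = (∑ i, v i * w i) • 1
  | 0, v, w => by
    constructor <;>
    · show (_ • (1 : Matrix (Fin 1) (Fin 1) R)) * (_ • 1) = _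
      rw [Matrix.smul_mul, Matrix.mul_smul, Matrix.one_mul, smul_smul, Fin.sum_univ_one]
      try rw [mul_comm (w 0) (v 0)]
  | n + 1, v, w => by
    obtain ⟨ih1, ih2⟩ := suslin_mul_conj n (fun i => v i.succ) (fun i => w i.succ)
    set p := suslinPair R n (fun i => v i.succ) (fun i => w i.succ) with hp
    have hsum : (∑ i, v i * w i) =
        v 0 * w 0 + ∑ i : Fin (n + 1), v i.succ * w i.succ := Fin.sum_univ_succ _
    have key : ∀ (a b : R) (X Y : Matrix (Fin (2 ^ n)) (Fin (2 ^ n)) R)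
        (hXY : X * Y = (∑ i : Fin (n + 1), v i.succ * w i.succ) • 1)
        (hYX : Y * X = (∑ i : Fin (n + 1), v i.succ * w i.succ) • 1),
        Matrix.fromBlocks (a • 1) X (-Y) (b • 1) *
          Matrix.fromBlocks (b • 1) (-X) Y (a • 1) =
        ((a * b + ∑ i : Fin (n + 1), v i.succ * w i.succ) •
          (1 : Matrix (Fin (2 ^ n) ⊕ Fin (2 ^ n)) (Fin (2 ^ n) ⊕ Fin (2 ^ n)) R)) := by
      intro a b X Y hXY hYX
      rw [Matrix.fromBlocks_multiply, ← Matrix.fromBlocks_one, Matrix.fromBlocks_smul,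
        Matrix.fromBlocks_inj]
      refine ⟨?_, ?_, ?_, ?_⟩
      · rw [Matrix.smul_mul, Matrix.one_mul, smul_smul, hXY, add_smul]
      · rw [Matrix.smul_mul, Matrix.one_mul, Matrix.mul_smul, Matrix.mul_one, smul_neg,
          neg_add_cancel, smul_zero]
      · rw [Matrix.mul_smul, Matrix.mul_one, Matrix.smul_mul, Matrix.one_mul, smul_neg,
          neg_add_cancel, smul_zero]
      · rw [Matrix.neg_mul, Matrix.mul_neg, neg_neg, hYX, Matrix.smul_mul, Matrix.one_mul,
          smul_smul, add_smul, add_comm, mul_comm b a]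
    constructor <;>
    · show Matrix.reindex _ _ _ * Matrix.reindex _ _ _ = _
      rw [Matrix.reindex_apply, Matrix.reindex_apply, Matrix.submatrix_mul_equiv]
      first
      | rw [key _ _ p.1 p.2 ih1 ih2]
      | (rw [show Matrix.fromBlocks ((w 0) • 1) (-p.1) p.2 ((v 0) • 1) *
              Matrix.fromBlocks ((v 0) • 1) p.1 (-p.2) ((w 0) • 1) =
            Matrix.fromBlocks ((w 0) • 1) (-p.1) (-(-p.2)) ((v 0) • 1) *
              Matrix.fromBlocks ((v 0) • 1) (-(-p.1)) (-p.2) ((w 0) • 1) by rw [neg_neg, neg_neg]]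
         rw [key _ _ (-p.1) (-p.2) (by rw [Matrix.neg_mul, Matrix.mul_neg, neg_neg, ih1])
              (by rw [Matrix.neg_mul, Matrix.mul_neg, neg_neg, ih2])])
      ext i j
      simp [Matrix.submatrix_apply, Matrix.one_apply, EmbeddingLike.apply_eq_iff_eq, hsum,
        mul_comm (w 0) (v 0), Fin.ext_iff]

/-- det S_n(v,w) = (v·wᵀ)^{2^{n−1}} for all n ≥ 1 and
v, w ∈ R^{n+1}. -/
theorem suslin_det {R : Type*} [CommRing R] (n : ℕ) (hn : 1 ≤ n)
    (v w : Fin (n + 1) → R) :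
    ((suslinPair R n v w).1).det = (∑ i, v i * w i) ^ (2 ^ (n - 1)) := by
  obtain ⟨m, rfl⟩ : ∃ m, n = m + 1 := ⟨n - 1, (Nat.succ_pred_eq_of_pos hn).symm⟩
  set p := suslinPair R m (fun i => v i.succ) (fun i => w i.succ) with hp
  have hmul := (suslin_mul_conj m (fun i => v i.succ) (fun i => w i.succ)).1
  show (Matrix.reindex _ _ _).det = _
  rw [Matrix.det_reindex_self, det_fromBlocks_smul_one]
  have : w 0 • ((v 0) • (1 : Matrix (Fin (2 ^ m)) (Fin (2 ^ m)) R)) - p.1 * (-p.2) =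
      (∑ i, v i * w i) • 1 := by
    rw [Matrix.mul_neg, sub_neg_eq_add, hmul, smul_smul, ← add_smul]
    congr 1
    conv_rhs => rw [Fin.sum_univ_succ]
    rw [mul_comm]
  rw [this, Matrix.det_smul, Matrix.det_one, mul_one, Fintype.card_fin]
  congr 1
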